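/- Let G be a graph on n vertices containing no path of length k (a path with k edges) as a subgraph. Then G has at most (k-1)n/2 edges. Moreover, equality holds if and only if k divides n and G is the vertex-disjoint union of n/k complete graphs on k vertices. -/

import Mathlib

/-- A path of length `k` (with `k` edges) in a graph: a sequence of `k+1` distinct
vertices whose consecutive members are adjacent. -/
def HasPathOfLength {V : Type*} (G : SimpleGraph V) (k : ℕ) : Prop :=
  ∃ p : Fin (k + 1) → V,
    Function.Injective p ∧ ∀ i : Fin k, G.Adj (p i.castSucc) (p i.succ)

namespace EG
variable {V : Type*} {G : SimpleGraph V}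

lemma path_mono {m j : ℕ} (h : HasPathOfLength G m) (hj : j ≤ m) : HasPathOfLength G j := by
  obtain ⟨p, hinj, hadj⟩ := h
  refine ⟨fun i => p (Fin.castLE (by omega) i), fun a b hab => ?_, fun i => ?_⟩
  · have := hinj hab
    exact Fin.ext (by simpa [Fin.ext_iff] using this)
  · have := hadj (Fin.castLE (by omega) i)
    convert this using 2 <;> simp [Fin.ext_iff]

lemma prepend {l : ℕ} (x : Fin (l+1) → V) (hinj : Function.Injective x)
    (hadj : ∀ i : Fin l, G.Adj (x i.castSucc) (x i.succ)) (y : V) (hy : y ∉ Set.range x)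
    (hyx : G.Adj y (x 0)) : HasPathOfLength G (l+1) := by
  refine ⟨Fin.cases y x, ?_, ?_⟩
  · intro a b hab
    induction a using Fin.cases with
    | zero => induction b using Fin.cases with
      | zero => rfl
      | succ b => simp only [Fin.cases_zero, Fin.cases_succ] at hab
                  exact absurd ⟨b, hab.symm⟩ hy
    | succ a => induction b using Fin.cases with
      | zero => simp only [Fin.cases_zero, Fin.cases_succ] at hab
                exact absurd ⟨a, hab⟩ hy
      | succ b => simp only [Fin.cases_succ] at hab
                  exact congrArg Fin.succ (hinj hab)
  · intro i
    induction i using Fin.cases with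
    | zero => simp only [Fin.castSucc_zero, Fin.cases_zero, Fin.cases_succ]; exact hyx
    | succ j =>
        have h1 : (Fin.succ j).castSucc = (Fin.castSucc j).succ := (Fin.succ_castSucc j).symm
        show G.Adj (Fin.cases y x (j.succ.castSucc)) (Fin.cases y x (j.succ.succ))
        rw [h1, Fin.cases_succ, Fin.cases_succ]
        exact hadj j

lemma reverse {l : ℕ} (x : Fin (l+1) → V) (hinj : Function.Injective x)
    (hadj : ∀ i : Fin l, G.Adj (x i.castSucc) (x i.succ)) :
    Function.Injective (x ∘ Fin.rev) ∧
      (∀ i : Fin l, G.Adj ((x ∘ Fin.rev) i.castSucc) ((x ∘ Fin.rev) i.succ)) ∧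
      (x ∘ Fin.rev) 0 = x (Fin.last l) ∧ Set.range (x ∘ Fin.rev) = Set.range x := by
  refine ⟨hinj.comp Fin.rev_injective, fun i => ?_, by simp, ?_⟩
  · have h1 : (Fin.castSucc i).rev = (i.rev).succ := Fin.rev_castSucc i
    have h2 : (Fin.succ i).rev = (i.rev).castSucc := Fin.rev_succ i
    simp only [Function.comp, h1, h2]
    exact (hadj i.rev).symm
  · exact Fin.rev_surjective.range_comp x

lemma clique_path [DecidableEq V] {k : ℕ} (p : Finset V) (hcard : p.card = k)
    (hclique : ∀ a ∈ p, ∀ b ∈ p, a ≠ b → G.Adj a b) {u v : V} (hu : u ∈ p) (hv : v ∉ p)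
    (hadj : G.Adj v u) : HasPathOfLength G k := by
  obtain ⟨m, rfl⟩ : ∃ m, k = m + 1 := ⟨k - 1, by have := Finset.card_pos.2 ⟨u, hu⟩; omega⟩
  set L : List V := u :: (p.erase u).toList with hL
  have hlen : L.length = m + 1 := by
    simp [hL, Finset.length_toList, Finset.card_erase_of_mem hu, hcard]
  have hnodup : L.Nodup := by
    refine List.nodup_cons.2 ⟨fun h => ?_, (p.erase u).nodup_toList⟩
    exact (Finset.notMem_erase u p) (Finset.mem_toList.1 h)
  have hmemL : ∀ a ∈ L, a ∈ p := by
    intro a ha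
    rcases List.mem_cons.1 ha with h | h
    · exact h ▸ hu
    · exact Finset.mem_of_mem_erase (Finset.mem_toList.1 h)
  set x : Fin (m + 1) → V := fun i => L.get (Fin.cast hlen.symm i) with hx
  have hxinj : Function.Injective x := by
    intro a b hab
    have := (List.nodup_iff_injective_get.1 hnodup) hab
    simpa [Fin.ext_iff] using congrArg Fin.val this
  have hxmem : ∀ i, x i ∈ p := fun i => hmemL _ (L.get_mem _)
  have hxadj : ∀ i : Fin m, G.Adj (x i.castSucc) (x i.succ) := by
    intro i
    refine hclique _ (hxmem _) _ (hxmem _) fun h => ?_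
    have := hxinj h
    simp [Fin.ext_iff] at this
  have hx0 : x 0 = u := rfl
  refine prepend x hxinj hxadj v (fun ⟨i, hi⟩ => hv (hi ▸ hxmem i)) (hx0 ▸ hadj)

section induce
variable [Fintype V] [DecidableEq V] [DecidableRel G.Adj] (s : Set V) [DecidablePred (· ∈ s)]

instance : DecidableRel (G.induce s).Adj := fun a b =>
  decidable_of_iff (G.Adj a b) (by simp)

lemma induce_path {m : ℕ} (h : HasPathOfLength (G.induce s) m) : HasPathOfLength G m := by
  obtain ⟨p, hinj, hadj⟩ := h
  exact ⟨fun i => (p i : V), fun a b hab => hinj (Subtype.ext hab),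
    fun i => by simpa using hadj i⟩

lemma degree_induce (a : s) :
    (G.induce s).degree a = ((G.neighborFinset (a : V)).filter (· ∈ s)).card := by
  unfold SimpleGraph.degree
  refine Finset.card_bij (fun b _ => (b : V)) ?_ ?_ ?_
  · intro b hb
    simp only [SimpleGraph.mem_neighborFinset] at hb
    simp only [Finset.mem_filter, SimpleGraph.mem_neighborFinset]
    exact ⟨by simpa using hb, b.2⟩
  · intro b₁ _ b₂ _ h; exact Subtype.ext h
  · intro c hc
    simp only [Finset.mem_filter, SimpleGraph.mem_neighborFinset] at hc
    exact ⟨⟨c, hc.2⟩, by simp [SimpleGraph.mem_neighborFinset, hc.1], rfl⟩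

lemma sum_degree_induce :
    2 * (G.induce s).edgeFinset.card
      = ∑ u ∈ Finset.univ.filter (· ∈ s), ((G.neighborFinset u).filter (· ∈ s)).card := by
  rw [← SimpleGraph.sum_degrees_eq_twice_card_edges]
  rw [← Finset.sum_subtype_eq_sum_filter, Finset.subtype_univ]
  exact Finset.sum_congr rfl fun a _ => degree_induce s a

end induce

variable [Fintype V] [DecidableEq V] [DecidableRel G.Adj]

lemma eq_of_partition {k : ℕ} (P : Finset (Finset V))
    (hparts : ∀ p ∈ P, p.card = k)
    (hdisj : ∀ p ∈ P, ∀ q ∈ P, p ≠ q → Disjoint p q)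
    (hcover : ∀ x : V, ∃ p ∈ P, x ∈ p)
    (hchar : ∀ a b : V, G.Adj a b ↔ a ≠ b ∧ ∃ p ∈ P, a ∈ p ∧ b ∈ p) :
    2 * G.edgeFinset.card = (k - 1) * Fintype.card V := by
  rw [← SimpleGraph.sum_degrees_eq_twice_card_edges]
  have hdeg : ∀ v : V, G.degree v = k - 1 := by
    intro v
    obtain ⟨p, hp, hvp⟩ := hcover v
    have hnb : G.neighborFinset v = p.erase v := by
      ext b
      simp only [SimpleGraph.mem_neighborFinset, Finset.mem_erase]
      rw [hchar]
      constructor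
      · rintro ⟨hne, q, hq, hvq, hbq⟩
        have : q = p := by
          by_contra hqp
          exact Finset.disjoint_left.1 (hdisj q hq p hp hqp) hvq hvp
        exact ⟨fun h => hne h.symm, this ▸ hbq⟩
      · rintro ⟨hne, hbp⟩
        exact ⟨fun h => hne h.symm, p, hp, hvp, hbp⟩
    rw [SimpleGraph.degree, hnb, Finset.card_erase_of_mem hvp, hparts p hp]
  rw [Finset.sum_congr rfl (fun v _ => hdeg v), Finset.sum_const, Finset.card_univ,
    smul_eq_mul, mul_comm]
lemma exists_closed {k : ℕ} (hk : 2 ≤ k) [Nonempty V] (hforb : ¬ HasPathOfLength G k)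
    (hdeg : ∀ v, k ≤ 2 * G.degree v) :
    ∃ S : Finset V, S.Nonempty ∧ S.card ≤ k ∧ ∀ a ∈ S, ∀ b, G.Adj a b → b ∈ S := by
  classical
  set Pr : ℕ → Prop := fun m => HasPathOfLength G m with hPr
  have hP0 : Pr 0 :=
    ⟨fun _ => Classical.arbitrary V, fun a b _ => Fin.ext (by omega), fun i => i.elim0⟩
  set l := Nat.findGreatest Pr (k-1) with hldef
  have hPl : Pr l := Nat.findGreatest_spec (m := 0) (Nat.zero_le _) hP0
  have hlk : l ≤ k - 1 := Nat.findGreatest_le _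
  have hnot : ¬ Pr (l+1) := by
    rcases le_or_gt (l+1) (k-1) with h | h
    · exact Nat.findGreatest_is_greatest (Nat.lt_succ_self l) h
    · intro hp; exact hforb (path_mono hp (by omega))
  obtain ⟨x, hinj, hadj⟩ := hPl
  have hadj' : ∀ (a : ℕ) (ha : a < l), G.Adj (x ⟨a, by omega⟩) (x ⟨a+1, by omega⟩) :=
    fun a ha => hadj ⟨a, ha⟩
  have hclosed0 : ∀ y, y ∉ Set.range x → G.Adj y (x 0) → False :=
    fun y hy h => hnot (prepend x hinj hadj y hy h)
  obtain ⟨rinj, radj, r0, rrange⟩ := reverse x hinj hadj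
  have hclosedl : ∀ y, y ∉ Set.range x → G.Adj y (x (Fin.last l)) → False := by
    intro y hy h
    exact hnot (prepend (x ∘ Fin.rev) rinj radj y (by rw [rrange]; exact hy) (by rw [r0]; exact h))
  set A : Finset (Fin l) := Finset.univ.filter (fun i => G.Adj (x 0) (x i.succ)) with hA
  set B : Finset (Fin l) := Finset.univ.filter (fun i => G.Adj (x (Fin.last l)) (x i.castSucc))
    with hB
  have hAcard : A.card = G.degree (x 0) := by
    refine Finset.card_bij (fun i _ => x i.succ) ?_ ?_ ?_
    · intro i hi
      rw [SimpleGraph.mem_neighborFinset]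
      exact (Finset.mem_filter.1 hi).2
    · intro i _ j _ h
      exact Fin.succ_injective _ (hinj h)
    · intro y hy
      rw [SimpleGraph.mem_neighborFinset] at hy
      have hyr : y ∈ Set.range x := by
        by_contra h
        exact hclosed0 y h hy.symm
      obtain ⟨j, rfl⟩ := hyr
      have hj0 : j ≠ 0 := fun h => G.ne_of_adj hy (by rw [h])
      obtain ⟨i, rfl⟩ := Fin.exists_succ_eq.2 hj0
      exact ⟨i, Finset.mem_filter.2 ⟨Finset.mem_univ _, hy⟩, rfl⟩
  have hBcard : B.card = G.degree (x (Fin.last l)) := by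
    refine Finset.card_bij (fun i _ => x i.castSucc) ?_ ?_ ?_
    · intro i hi
      rw [SimpleGraph.mem_neighborFinset]
      exact (Finset.mem_filter.1 hi).2
    · intro i _ j _ h
      exact Fin.castSucc_injective _ (hinj h)
    · intro y hy
      rw [SimpleGraph.mem_neighborFinset] at hy
      have hyr : y ∈ Set.range x := by
        by_contra h
        exact hclosedl y h hy.symm
      obtain ⟨j, rfl⟩ := hyr
      have hj0 : j ≠ Fin.last l := fun h => G.ne_of_adj hy (by rw [h])
      obtain ⟨i, rfl⟩ := Fin.exists_castSucc_eq.2 hj0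
      exact ⟨i, Finset.mem_filter.2 ⟨Finset.mem_univ _, hy⟩, rfl⟩
  have hsum : k ≤ A.card + B.card := by
    have h1 := hdeg (x 0); have h2 := hdeg (x (Fin.last l)); omega
  have hU : (A ∪ B).card ≤ l := by
    have := Finset.card_le_card (Finset.subset_univ (A ∪ B))
    simpa using this
  have hint : (A ∩ B).Nonempty := by
    rw [← Finset.card_pos]
    have := Finset.card_union_add_card_inter A B
    omega
  obtain ⟨i, hi⟩ := hint
  have hiA : G.Adj (x 0) (x i.succ) :=
    (Finset.mem_filter.1 (Finset.mem_inter.1 hi).1).2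
  have hiB : G.Adj (x (Fin.last l)) (x i.castSucc) :=
    (Finset.mem_filter.1 (Finset.mem_inter.1 hi).2).2
  have hil : i.val < l := i.isLt
  -- the cycle
  set c : Fin (l+1) → V := fun z =>
    if h : z.val ≤ i.val then x ⟨z.val, by omega⟩
    else x ⟨l + 1 + i.val - z.val, by have := z.isLt; omega⟩ with hc
  have hcthen : ∀ (z : Fin (l+1)) (h : z.val ≤ i.val),
      c z = x ⟨z.val, by have := z.isLt; omega⟩ := fun z h => dif_pos h
  have hcelse : ∀ (z : Fin (l+1)) (h : ¬ z.val ≤ i.val),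
      c z = x ⟨l + 1 + i.val - z.val, by have := z.isLt; omega⟩ := fun z h => dif_neg h
  have xeq : ∀ (a b : ℕ) (ha : a < l+1) (hb : b < l+1), a = b → x ⟨a,ha⟩ = x ⟨b,hb⟩ := by
    rintro a b ha hb rfl; rfl
  have hcadj : ∀ z : Fin (l+1), G.Adj (c z) (c (z+1)) := by
    intro z
    have hzl : z.val < l + 1 := z.isLt
    by_cases hzlast : z = Fin.last l
    · have hzv : z.val = l := by rw [hzlast]; rfl
      have hv : (z+1).val = 0 := by rw [hzlast, Fin.last_add_one]; rfl
      rw [hcelse z (by omega), hcthen (z+1) (by omega),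
        xeq _ (i.val+1) _ (by omega) (by omega), xeq _ 0 _ (by omega) hv]
      exact hiA.symm
    · have hzl' : z.val < l := by
        rcases Nat.lt_or_ge z.val l with h | h
        · exact h
        · exact absurd (Fin.ext (by rw [Fin.val_last]; omega)) hzlast
      have hv : (z + 1).val = z.val + 1 :=
        Fin.val_add_one_of_lt (by rw [Fin.lt_def]; simpa [Fin.val_last] using hzl')
      rcases lt_trichotomy z.val i.val with h1 | h1 | h1
      · rw [hcthen z (by omega), hcthen (z+1) (by omega), xeq _ (z.val+1) _ (by omega) hv]
        exact hadj' z.val hzl'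
      · rw [hcthen z (by omega), hcelse (z+1) (by omega),
          xeq z.val i.val _ (by omega) h1,
          xeq (l + 1 + i.val - (z+1).val) l (by have := (z+1).isLt; omega) (by omega) (by omega)]
        exact hiB.symm
      · rw [hcelse z (by omega), hcelse (z+1) (by omega),
          xeq _ ((l + i.val - z.val) + 1) _ (by omega) (by omega),
          xeq (l + 1 + i.val - (z+1).val) (l + i.val - z.val) (by have := (z+1).isLt; omega) (by omega) (by omega)]
        exact (hadj' (l + i.val - z.val) (by omega)).symm
  have hcinj : Function.Injective c := by
    intro z1 z2 h
    have h1 := z1.isLt; have h2 := z2.isLt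
    by_cases e1 : z1.val ≤ i.val <;> by_cases e2 : z2.val ≤ i.val <;>
      [rw [hcthen z1 e1, hcthen z2 e2] at h;
       rw [hcthen z1 e1, hcelse z2 e2] at h;
       rw [hcelse z1 e1, hcthen z2 e2] at h;
       rw [hcelse z1 e1, hcelse z2 e2] at h] <;>
    · have h3 := hinj h
      simp only [Fin.mk.injEq] at h3
      exact Fin.ext (by omega)
  have hcrange : ∀ j : Fin (l+1), x j ∈ Set.range c := by
    intro j
    have hjl := j.isLt
    rcases le_or_gt j.val i.val with h | h
    · refine ⟨⟨j.val, j.isLt⟩, ?_⟩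
      rw [hcthen _ h]
    · refine ⟨⟨l + 1 + i.val - j.val, by omega⟩, ?_⟩
      rw [hcelse _ (by show ¬ (l + 1 + i.val - j.val ≤ i.val); omega)]
      exact congrArg x (Fin.ext (by show l + 1 + i.val - (l + 1 + i.val - j.val) = j.val; omega))
  have hcrange' : Set.range c ⊆ Set.range x := by
    rintro _ ⟨z, rfl⟩
    by_cases h : z.val ≤ i.val
    · rw [hcthen z h]; exact Set.mem_range_self _
    · rw [hcelse z h]; exact Set.mem_range_self _
  -- the closed set
  refine ⟨Finset.univ.image x, ⟨x 0, Finset.mem_image.2 ⟨0, Finset.mem_univ _, rfl⟩⟩, ?_, ?_⟩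
  · rw [Finset.card_image_of_injective _ hinj]
    simp; omega
  · intro a ha b hab
    obtain ⟨j, _, rfl⟩ := Finset.mem_image.1 ha
    by_contra hb
    have hbr : b ∉ Set.range x := by
      intro ⟨j', hj'⟩
      exact hb (Finset.mem_image.2 ⟨j', Finset.mem_univ _, hj'⟩)
    obtain ⟨z0, hz0⟩ := hcrange j
    set p' : Fin (l+1) → V := fun m => c (z0 + m) with hp'
    have p'inj : Function.Injective p' :=
      fun a b hh => add_left_cancel (hcinj hh)
    have p'adj : ∀ m : Fin l, G.Adj (p' m.castSucc) (p' m.succ) := by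
      intro m
      rw [hp']; simp only []
      have : z0 + m.succ = (z0 + m.castSucc) + 1 := by
        rw [add_assoc, Fin.coeSucc_eq_succ]
      rw [this]
      exact hcadj _
    have p'0 : p' 0 = x j := by rw [hp']; simpa using hz0
    have hbr' : b ∉ Set.range p' := by
      intro ⟨m, hm⟩
      exact hbr (hcrange' ⟨z0 + m, hm⟩)
    exact hnot (prepend p' p'inj p'adj b hbr' (p'0 ▸ hab.symm))
def Good {V : Type*} [Fintype V] (G : SimpleGraph V) (k : ℕ) : Prop :=
  k ∣ Fintype.card V ∧
    ∃ P : Finset (Finset V),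
      P.card = Fintype.card V / k ∧
      (∀ p ∈ P, p.card = k) ∧
      (∀ p ∈ P, ∀ q ∈ P, p ≠ q → Disjoint p q) ∧
      (∀ x : V, ∃ p ∈ P, x ∈ p) ∧
      (∀ a b : V, G.Adj a b ↔ a ≠ b ∧ ∃ p ∈ P, a ∈ p ∧ b ∈ p)

theorem aux : ∀ (n : ℕ) {V : Type u_1} [Fintype V] [DecidableEq V] (G : SimpleGraph V)
    [DecidableRel G.Adj] (k : ℕ), Fintype.card V = n → ¬ HasPathOfLength G k →
    2 * G.edgeFinset.card ≤ (k - 1) * Fintype.card V ∧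
      (2 * G.edgeFinset.card = (k - 1) * Fintype.card V → Good G k) := by
  intro n
  induction n using Nat.strong_induction_on with
  | _ n IH =>
  intro V _ _ G _ k hn hforb
  have hhs := SimpleGraph.sum_degrees_eq_twice_card_edges G
  rcases Nat.eq_zero_or_pos n with h0 | hpos
  · -- empty vertex set
    subst h0
    haveI : IsEmpty V := Fintype.card_eq_zero_iff.1 hn
    have he : 2 * G.edgeFinset.card = 0 := by rw [← hhs]; simp
    refine ⟨by omega, fun _ => ⟨by rw [hn]; exact dvd_zero k, ∅, ?_, ?_, ?_, ?_, ?_⟩⟩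
    · simp [hn]
    · simp
    · simp
    · exact fun x => (IsEmpty.false x).elim
    · exact fun a => (IsEmpty.false a).elim
  haveI : Nonempty V := Fintype.card_pos_iff.1 (hn ▸ hpos)
  rcases Nat.lt_or_ge k 2 with hk2 | hk
  · interval_cases k
    · -- k = 0 : contradiction
      exact absurd ⟨fun _ => Classical.arbitrary V, fun a b _ => Fin.ext (by omega),
        fun i => i.elim0⟩ hforb
    · -- k = 1 : no edges
      have hnoadj : ∀ a b : V, ¬ G.Adj a b := by
        intro a b hab
        refine hforb ⟨fun i => if i = 0 then a else b, ?_, ?_⟩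
        · intro x y hxy
          dsimp only at hxy
          by_cases hx : x = 0 <;> by_cases hy : y = 0
          · rw [hx, hy]
          · rw [if_pos hx, if_neg hy] at hxy; exact absurd hxy hab.ne
          · rw [if_neg hx, if_pos hy] at hxy; exact absurd hxy.symm hab.ne
          · have hx' : x.val ≠ 0 := fun h => hx (Fin.ext h)
            have hy' : y.val ≠ 0 := fun h => hy (Fin.ext h)
            have h1 := x.isLt; have h2 := y.isLt
            exact Fin.ext (by omega)
        · intro i
          have hi : i = 0 := Fin.ext (by omega)
          subst hi
          show G.Adj (if (0 : Fin 2) = 0 then a else b) (if (1 : Fin 2) = 0 then a else b)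
          rw [if_pos rfl, if_neg (by decide)]
          exact hab
      have he : 2 * G.edgeFinset.card = 0 := by
        rw [← hhs]
        refine Finset.sum_eq_zero fun v _ => ?_
        rw [SimpleGraph.degree, Finset.card_eq_zero]
        ext b; simp [hnoadj v b]
      refine ⟨by omega, fun _ => ⟨one_dvd _, Finset.univ.image ({·}), ?_, ?_, ?_, ?_, ?_⟩⟩
      · rw [Finset.card_image_of_injective _ (fun a b h => Finset.singleton_injective h)]
        simp
      · intro p hp
        obtain ⟨x, _, rfl⟩ := Finset.mem_image.1 hp
        simp
      · intro p hp q hq hpq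
        obtain ⟨x, _, rfl⟩ := Finset.mem_image.1 hp
        obtain ⟨y, _, rfl⟩ := Finset.mem_image.1 hq
        simp only [Finset.disjoint_singleton]
        exact fun h => hpq (by rw [h])
      · exact fun x => ⟨{x}, Finset.mem_image.2 ⟨x, Finset.mem_univ _, rfl⟩, Finset.mem_singleton_self x⟩
      · intro a b
        constructor
        · exact fun h => absurd h (hnoadj a b)
        · rintro ⟨hne, p, hp, hap, hbp⟩
          obtain ⟨x, _, rfl⟩ := Finset.mem_image.1 hp
          rw [Finset.mem_singleton] at hap hbp
          exact absurd (hap.trans hbp.symm) hne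
  -- now k ≥ 2
  by_cases hmin : ∃ v, 2 * G.degree v < k
  · -- Case 1 : low degree vertex
    obtain ⟨v, hv⟩ := hmin
    obtain ⟨m, rfl⟩ : ∃ m, n = m + 1 := ⟨n - 1, by omega⟩
    set s : Set V := {x | x ≠ v} with hs
    haveI : DecidablePred (· ∈ s) := fun x => show Decidable (x ≠ v) from inferInstance
    have hcards : Fintype.card ↥s = m := by
      rw [Fintype.card_subtype]
      have : Finset.univ.filter (· ∈ s) = Finset.univ.erase v := by
        ext u; simp [hs]
      rw [this, Finset.card_erase_of_mem (Finset.mem_univ v), Finset.card_univ, hn]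
      omega
    have hforb' : ¬ HasPathOfLength (G.induce s) k := fun h => hforb (induce_path s h)
    obtain ⟨ih1, ih2⟩ := IH m (by omega) (G.induce s) k hcards hforb'
    rw [hcards] at ih1 ih2
    -- counting
    have hfil : Finset.univ.filter (· ∈ s) = Finset.univ.erase v := by ext u; simp [hs]
    have hptwise : ∀ u, (G.neighborFinset u).filter (· ∈ s) = (G.neighborFinset u).erase v := by
      intro u; ext b; simp [hs, and_comm]
    have h2e : 2 * G.edgeFinset.card
        = 2 * (G.induce s).edgeFinset.card + 2 * G.degree v := by
      rw [← hhs, sum_degree_induce s, hfil]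
      have e1 : ∑ u ∈ Finset.univ, G.degree u
          = ∑ u ∈ Finset.univ.erase v, G.degree u + G.degree v :=
        (Finset.sum_erase_add _ _ (Finset.mem_univ v)).symm
      have e2 : ∀ u ∈ Finset.univ.erase v,
          G.degree u = ((G.neighborFinset u).filter (· ∈ s)).card
            + (if G.Adj v u then 1 else 0) := by
        intro u hu
        rw [hptwise u]
        by_cases hadj : G.Adj v u
        · rw [if_pos hadj, Finset.card_erase_add_one]
          · rfl
          · rw [SimpleGraph.mem_neighborFinset]; exact hadj.symm
        · rw [if_neg hadj, Finset.erase_eq_of_notMem]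
          · rfl
          · rw [SimpleGraph.mem_neighborFinset]
            exact fun h => hadj h.symm
      have e3 : ∑ u ∈ Finset.univ.erase v, (if G.Adj v u then 1 else 0) = G.degree v := by
        rw [← Finset.card_filter]
        have : (Finset.univ.erase v).filter (G.Adj v) = G.neighborFinset v := by
          ext u
          simp only [Finset.mem_filter, Finset.mem_erase, Finset.mem_univ,
            SimpleGraph.mem_neighborFinset, and_true]
          exact ⟨fun h => h.2, fun h => ⟨h.ne', h⟩⟩
        rw [this]
        rfl
      rw [e1, Finset.sum_congr rfl e2, Finset.sum_add_distrib, e3]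
      omega
    have harith : (k-1) * (m+1) = (k-1) * m + (k-1) := by ring
    rw [hn]
    refine ⟨?_, ?_⟩
    · omega
    · intro heq
      exfalso
      have h2e' : 2 * (G.induce s).edgeFinset.card = (k-1) * m := by omega
      have hdv : 2 * G.degree v = k - 1 := by omega
      obtain ⟨hdvd', P', hP'card, hP'parts, hP'disj, hP'cover, hP'char⟩ := ih2 h2e'
      have hdvpos : 1 ≤ G.degree v := by omega
      obtain ⟨u, hu⟩ := Finset.card_pos.1 (show 0 < (G.neighborFinset v).card from hdvpos)
      rw [SimpleGraph.mem_neighborFinset] at hu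
      have huv : u ≠ v := hu.ne'
      obtain ⟨phat, hpP, hup⟩ := hP'cover ⟨u, huv⟩
      set p : Finset V := phat.map ⟨Subtype.val, Subtype.val_injective⟩ with hpdef
      have hpcard : p.card = k := by rw [hpdef, Finset.card_map]; exact hP'parts _ hpP
      have hmemp : ∀ a, a ∈ p ↔ ∃ h : a ≠ v, (⟨a, h⟩ : ↥s) ∈ phat := by
        intro a
        rw [hpdef, Finset.mem_map]
        constructor
        · rintro ⟨⟨a', ha'⟩, haP, rfl⟩
          exact ⟨ha', haP⟩
        · rintro ⟨h, hmem⟩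
          exact ⟨⟨a, h⟩, hmem, rfl⟩
      have hclique : ∀ a ∈ p, ∀ b ∈ p, a ≠ b → G.Adj a b := by
        intro a ha b hb hab
        obtain ⟨ha', haP⟩ := (hmemp a).1 ha
        obtain ⟨hb', hbP⟩ := (hmemp b).1 hb
        have : (G.induce s).Adj ⟨a, ha'⟩ ⟨b, hb'⟩ := by
          rw [hP'char]
          exact ⟨fun h => hab (congrArg Subtype.val h), phat, hpP, haP, hbP⟩
        simpa using this
      have hvp : v ∉ p := by
        rw [hmemp]
        rintro ⟨h, -⟩
        exact h rfl
      have hup' : u ∈ p := (hmemp u).2 ⟨huv, hup⟩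
      exact hforb (clique_path p hpcard hclique hup' hvp hu)
  · -- Case 2 : min degree ≥ k/2
    push_neg at hmin
    obtain ⟨S, hSne, hSk, hSclosed⟩ := exists_closed hk hforb hmin
    have hS1 : 1 ≤ S.card := Finset.card_pos.2 hSne
    have hSn : S.card ≤ n := hn ▸ Finset.card_le_univ S
    set s : Set V := {x | x ∉ S} with hs
    haveI : DecidablePred (· ∈ s) := fun x => show Decidable (x ∉ S) from inferInstance
    have hcards : Fintype.card ↥s = n - S.card := by
      rw [Fintype.card_subtype]
      have : Finset.univ.filter (· ∈ s) = Sᶜ := by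
        ext u; simp [hs]
      rw [this, Finset.card_compl, hn]
    have hforb' : ¬ HasPathOfLength (G.induce s) k := fun h => hforb (induce_path s h)
    obtain ⟨ih1, ih2⟩ := IH (n - S.card) (by omega) (G.induce s) k hcards hforb'
    rw [hcards] at ih1 ih2
    -- degrees within S
    have hnbS : ∀ u ∈ S, G.neighborFinset u ⊆ S.erase u := by
      intro u hu b hb
      rw [SimpleGraph.mem_neighborFinset] at hb
      exact Finset.mem_erase.2 ⟨hb.ne', hSclosed u hu b hb⟩
    have hdegS : ∀ u ∈ S, G.degree u ≤ S.card - 1 := by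
      intro u hu
      have := Finset.card_le_card (hnbS u hu)
      rwa [Finset.card_erase_of_mem hu] at this
    -- counting
    have h2e : 2 * G.edgeFinset.card
        = (∑ u ∈ S, G.degree u) + 2 * (G.induce s).edgeFinset.card := by
      rw [← hhs, sum_degree_induce s]
      have hfil1 : Finset.univ.filter (fun x => x ∈ S) = S := by ext u; simp
      have hfil2 : Finset.univ.filter (· ∈ s) = Finset.univ.filter (fun x => ¬ x ∈ S) := by
        ext u; simp [hs]
      have hcongr : ∀ u ∈ Finset.univ.filter (· ∈ s),
          ((G.neighborFinset u).filter (· ∈ s)).card = G.degree u := by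
        intro u hu
        rw [Finset.mem_filter] at hu
        congr 1
        refine Finset.filter_true_of_mem ?_
        intro b hb
        rw [SimpleGraph.mem_neighborFinset] at hb
        intro hbS
        exact hu.2 (hSclosed b hbS u hb.symm)
      rw [Finset.sum_congr rfl hcongr, hfil2,
        ← Finset.sum_filter_add_sum_filter_not Finset.univ (fun x => x ∈ S) (fun v => G.degree v), hfil1]
    have hsumS : ∑ u ∈ S, G.degree u ≤ (k-1) * S.card := by
      calc ∑ u ∈ S, G.degree u ≤ S.card • (k-1) :=
            Finset.sum_le_card_nsmul _ _ _ (fun u hu => by have := hdegS u hu; omega)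
        _ = (k-1) * S.card := by rw [smul_eq_mul, mul_comm]
    have harith : (k-1) * S.card + (k-1) * (n - S.card) = (k-1) * n := by
      rw [← Nat.mul_add, Nat.add_sub_cancel' hSn]
    rw [hn]
    refine ⟨by omega, ?_⟩
    intro heq
    have hsum_eq : ∑ u ∈ S, G.degree u = (k-1) * S.card := by omega
    have h2e' : 2 * (G.induce s).edgeFinset.card = (k-1) * (n - S.card) := by omega
    have hdeg_eq : ∀ u ∈ S, G.degree u = k - 1 := by
      by_contra hcon
      push_neg at hcon
      obtain ⟨u0, hu0S, hu0⟩ := hcon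
      have hlt : ∑ u ∈ S, G.degree u < ∑ _u ∈ S, (k-1) :=
        Finset.sum_lt_sum (fun u hu => by have := hdegS u hu; omega)
          ⟨u0, hu0S, by have := hdegS u0 hu0S; omega⟩
      rw [Finset.sum_const, smul_eq_mul, mul_comm] at hlt
      omega
    have hScard : S.card = k := by
      obtain ⟨u0, hu0⟩ := hSne
      have h1 := hdegS u0 hu0
      have h2 := hdeg_eq u0 hu0
      omega
    have hSclique : ∀ a ∈ S, ∀ b ∈ S, a ≠ b → G.Adj a b := by
      intro a ha b hb hab
      have hset : G.neighborFinset a = S.erase a := by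
        refine Finset.eq_of_subset_of_card_le (hnbS a ha) ?_
        rw [Finset.card_erase_of_mem ha]
        show S.card - 1 ≤ G.degree a
        rw [hdeg_eq a ha, hScard]
      have : b ∈ G.neighborFinset a := by
        rw [hset]
        exact Finset.mem_erase.2 ⟨fun h => hab h.symm, hb⟩
      rwa [SimpleGraph.mem_neighborFinset] at this
    obtain ⟨hdvd', P', hP'card, hP'parts, hP'disj, hP'cover, hP'char⟩ := ih2 h2e'
    rw [hcards] at hdvd' hP'card
    have hdvd : k ∣ Fintype.card V := by
      rw [hn]
      have : n = (n - S.card) + k := by omega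
      rw [this]
      exact Nat.dvd_add hdvd' (dvd_refl k)
    set emb : ↥s ↪ V := ⟨Subtype.val, Subtype.val_injective⟩ with hemb
    have hmemmap : ∀ (q : Finset ↥s) (a : V), a ∈ q.map emb ↔ ∃ h : a ∈ s, (⟨a, h⟩ : ↥s) ∈ q := by
      intro q a
      rw [Finset.mem_map]
      constructor
      · rintro ⟨⟨a', ha'⟩, haq, rfl⟩
        exact ⟨ha', haq⟩
      · rintro ⟨h, hmem⟩
        exact ⟨⟨a, h⟩, hmem, rfl⟩
    have hmapS : ∀ (q : Finset ↥s) (a : V), a ∈ q.map emb → a ∉ S := by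
      intro q a ha
      obtain ⟨h, -⟩ := (hmemmap q a).1 ha
      exact h
    set P : Finset (Finset V) := insert S (P'.image (fun q => q.map emb)) with hP
    have hSnotimg : S ∉ P'.image (fun q => q.map emb) := by
      intro hmem
      obtain ⟨q, -, hq⟩ := Finset.mem_image.1 hmem
      obtain ⟨u0, hu0⟩ := hSne
      exact hmapS q u0 (hq.symm ▸ hu0) hu0
    have hmemP : ∀ p, p ∈ P ↔ p = S ∨ ∃ q ∈ P', p = q.map emb := by
      intro p
      rw [hP, Finset.mem_insert, Finset.mem_image]
      constructor
      · rintro (rfl | ⟨q, hq, rfl⟩)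
        · exact Or.inl rfl
        · exact Or.inr ⟨q, hq, rfl⟩
      · rintro (rfl | ⟨q, hq, rfl⟩)
        · exact Or.inl rfl
        · exact Or.inr ⟨q, hq, rfl⟩
    refine ⟨hdvd, P, ?_, ?_, ?_, ?_, ?_⟩
    · rw [hn, hP, Finset.card_insert_of_notMem hSnotimg,
        Finset.card_image_of_injective _ (Finset.map_injective emb), hP'card, hScard]
      rw [hScard] at hdvd' hSn
      obtain ⟨c, hc⟩ := hdvd'
      have hkpos : 0 < k := by omega
      have hn' : n = k * (c + 1) := by rw [Nat.mul_succ, ← hc]; omega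
      rw [hc, Nat.mul_div_cancel_left c hkpos, hn', Nat.mul_div_cancel_left _ hkpos]
    · intro p hp
      rcases (hmemP p).1 hp with rfl | ⟨q, hq, rfl⟩
      · exact hScard
      · rw [Finset.card_map]; exact hP'parts q hq
    · intro p hp q hq hpq
      rcases (hmemP p).1 hp with rfl | ⟨p1, hp1, rfl⟩ <;>
        rcases (hmemP q).1 hq with h2 | ⟨q1, hq1, h2⟩
      · exact absurd h2.symm hpq
      · subst h2
        exact Finset.disjoint_left.2 fun a haS hamap => hmapS q1 a hamap haS
      · subst h2  -- q = S? no: first is map, second S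
        exact Finset.disjoint_right.2 fun a haS hamap => hmapS p1 a hamap haS
      · subst h2
        have hne : p1 ≠ q1 := fun h => hpq (by rw [h])
        refine Finset.disjoint_left.2 fun a hap haq => ?_
        obtain ⟨h1, hm1⟩ := (hmemmap p1 a).1 hap
        obtain ⟨h2', hm2⟩ := (hmemmap q1 a).1 haq
        exact Finset.disjoint_left.1 (hP'disj p1 hp1 q1 hq1 hne) hm1 hm2
    · intro x
      by_cases hx : x ∈ S
      · exact ⟨S, (hmemP S).2 (Or.inl rfl), hx⟩
      · obtain ⟨q, hq, hxq⟩ := hP'cover ⟨x, hx⟩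
        exact ⟨q.map emb, (hmemP _).2 (Or.inr ⟨q, hq, rfl⟩),
          (hmemmap q x).2 ⟨hx, hxq⟩⟩
    · intro a b
      by_cases ha : a ∈ S <;> by_cases hb : b ∈ S
      · constructor
        · exact fun h => ⟨h.ne, S, (hmemP S).2 (Or.inl rfl), ha, hb⟩
        · rintro ⟨hne, -⟩
          exact hSclique a ha b hb hne
      · constructor
        · intro h
          exact absurd (hSclosed a ha b h) hb
        · rintro ⟨hne, p, hp, hap, hbp⟩
          rcases (hmemP p).1 hp with rfl | ⟨q, hq, rfl⟩
          · exact absurd hbp hb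
          · exact absurd ha (hmapS q a hap)
      · constructor
        · intro h
          exact absurd (hSclosed b hb a h.symm) ha
        · rintro ⟨hne, p, hp, hap, hbp⟩
          rcases (hmemP p).1 hp with rfl | ⟨q, hq, rfl⟩
          · exact absurd hap ha
          · exact absurd hb (hmapS q b hbp)
      · have hGadj : G.Adj a b ↔ (G.induce s).Adj ⟨a, ha⟩ ⟨b, hb⟩ := by simp
        rw [hGadj, hP'char]
        constructor
        · rintro ⟨hne, q, hq, haq, hbq⟩
          refine ⟨fun h => hne (Subtype.ext h), q.map emb,
            (hmemP _).2 (Or.inr ⟨q, hq, rfl⟩), (hmemmap q a).2 ⟨ha, haq⟩,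
            (hmemmap q b).2 ⟨hb, hbq⟩⟩
        · rintro ⟨hne, p, hp, hap, hbp⟩
          rcases (hmemP p).1 hp with rfl | ⟨q, hq, rfl⟩
          · exact absurd hap ha
          · refine ⟨fun h => hne (congrArg Subtype.val h), q, hq, ?_, ?_⟩
            · obtain ⟨h1, hm⟩ := (hmemmap q a).1 hap
              exact hm
            · obtain ⟨h1, hm⟩ := (hmemmap q b).1 hbp
              exact hm

end EG

/-- Erdős–Gallai theorem: a graph on `n` vertices with no path of length `k` has at
most `(k-1)n/2` edges, with equality iff `k ∣ n` and the graph is the vertex-disjoint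
union of `n/k` complete graphs on `k` vertices. -/
theorem erdos_gallai_path {V : Type*} [Fintype V] [DecidableEq V]
    (G : SimpleGraph V) [DecidableRel G.Adj] (k : ℕ)
    (hforb : ¬ HasPathOfLength G k) :
    2 * G.edgeFinset.card ≤ (k - 1) * Fintype.card V ∧
    (2 * G.edgeFinset.card = (k - 1) * Fintype.card V ↔
      k ∣ Fintype.card V ∧
      ∃ P : Finset (Finset V),
        P.card = Fintype.card V / k ∧
        (∀ p ∈ P, p.card = k) ∧
        (∀ p ∈ P, ∀ q ∈ P, p ≠ q → Disjoint p q) ∧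
        (∀ x : V, ∃ p ∈ P, x ∈ p) ∧
        (∀ a b : V, G.Adj a b ↔ a ≠ b ∧ ∃ p ∈ P, a ∈ p ∧ b ∈ p)) := by
  obtain ⟨h1, h2⟩ := EG.aux (Fintype.card V) G k rfl hforb
  refine ⟨h1, ⟨fun h => h2 h, fun h => ?_⟩⟩
  obtain ⟨hdvd, P, hc1, hc2, hc3, hc4, hc5⟩ := h
  exact EG.eq_of_partition P hc2 hc3 hc4 hc5
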